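/- Let G be a finite subgroup of the unitary group U(n) generated by unitary reflections, and let f₁, …, f_n be homogeneous, algebraically independent polynomials generating the algebra ℂ[z₁, …, z_n]^G of G-invariant polynomials. Then the polynomial map f : ℂⁿ → ℂⁿ, v ↦ (f₁(v), …, f_n(v)), is a proper map: the preimage of every compact subset of ℂⁿ is compact. In particular, f is a closed map. -/

import Mathlib

noncomputable section

/-- The unitary group `U(n)` of `ℂⁿ`, realized as the unitary group of `n × n`
complex matrices. -/
abbrev UGrp (n : ℕ) := Matrix.unitaryGroup (Fin n) ℂ

/-- The natural action of `U(n)` on `ℂⁿ` by matrix-vector multiplication. -/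
instance {n : ℕ} : MulAction (UGrp n) (Fin n → ℂ) where
  smul g v := Matrix.mulVec g.1 v
  one_smul v := Matrix.one_mulVec v
  mul_smul g h v := (Matrix.mulVec_mulVec v g.1 h.1).symm

/-- A unitary reflection: an element of `U(n)` of finite order whose fixed-point
subspace `{v : gv = v}` is a complex hyperplane (complex dimension `n - 1`). -/
def IsUnitaryReflection {n : ℕ} (g : UGrp n) : Prop :=
  IsOfFinOrder g ∧
  Module.finrank ℂ ↥(LinearMap.ker ((g.1 - 1).mulVecLin)) + 1 = n

/-- Evaluation of a homogeneous polynomial scales by the degree. -/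
lemma homog_eval_smul {n m : ℕ} {p : MvPolynomial (Fin n) ℂ} (hp : p.IsHomogeneous m)
    (c : ℂ) (v : Fin n → ℂ) :
    MvPolynomial.eval (c • v) p = c ^ m * MvPolynomial.eval v p := by
  rw [MvPolynomial.eval_eq', MvPolynomial.eval_eq', Finset.mul_sum]
  refine Finset.sum_congr rfl fun s hs => ?_
  have hdeg : (∑ i, s i) = m := by
    have h1 : s.degree = m := by
      rw [Finsupp.degree_eq_weight_one]
      exact hp (MvPolynomial.mem_support_iff.mp hs)
    rw [← h1, Finsupp.degree]
    exact (Finset.sum_subset (Finset.subset_univ _)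
      (fun i _ hi => Finsupp.notMem_support_iff.mp hi)).symm
  have h2 : ∏ i, (c • v) i ^ s i = c ^ m * ∏ i, v i ^ s i := by
    simp only [Pi.smul_apply, smul_eq_mul, mul_pow]
    rw [Finset.prod_mul_distrib, Finset.prod_pow_eq_pow_sum, hdeg]
  rw [h2]; ring

/-- `aeval` and `eval` agree over `ℂ`. -/
lemma aeval_eq_eval' {n : ℕ} (v : Fin n → ℂ) (p : MvPolynomial (Fin n) ℂ) :
    MvPolynomial.aeval v p = MvPolynomial.eval v p := by
  rw [MvPolynomial.aeval_def, Algebra.algebraMap_self]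
  rfl

/-- The degrees of the basic invariants are positive. -/
lemma deg_pos {n : ℕ} (f : Fin n → MvPolynomial (Fin n) ℂ) (d : Fin n → ℕ)
    (hhom : ∀ i, (f i).IsHomogeneous (d i))
    (hindep : AlgebraicIndependent ℂ f) (i : Fin n) : d i ≠ 0 := by
  intro h0
  have hh : (f i).IsHomogeneous 0 := h0 ▸ hhom i
  have hC : f i = MvPolynomial.C (MvPolynomial.coeff 0 (f i)) := by
    ext s
    rcases eq_or_ne s 0 with rfl | hs
    · simp
    · rw [MvPolynomial.coeff_C, if_neg (Ne.symm hs)]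
      exact hh.coeff_eq_zero (by simpa [Finsupp.degree_eq_zero_iff] using hs)
  have ht := hindep.transcendental i
  rw [hC, ← MvPolynomial.algebraMap_eq] at ht
  exact ht (isAlgebraic_algebraMap _)

/-- Key algebraic fact: the common zero locus of the basic invariants is `{0}`. -/
lemma common_zero {n : ℕ} (G : Subgroup (UGrp n)) [Finite G]
    (f : Fin n → MvPolynomial (Fin n) ℂ) (d : Fin n → ℕ)
    (hhom : ∀ i, (f i).IsHomogeneous (d i))
    (hindep : AlgebraicIndependent ℂ f)
    (hgenalg : ∀ p : MvPolynomial (Fin n) ℂ,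
      (∀ g ∈ G, ∀ v : Fin n → ℂ,
        MvPolynomial.eval (Matrix.mulVec (g : UGrp n).1 v) p = MvPolynomial.eval v p) →
      p ∈ Algebra.adjoin ℂ (Set.range f))
    (u : Fin n → ℂ) (hu : ∀ i, MvPolynomial.eval u (f i) = 0) : u = 0 := by
  by_contra hne
  haveI : Fintype G := Fintype.ofFinite G
  -- every basic invariant vanishes at the origin
  have hf0 : ∀ i, MvPolynomial.eval (0 : Fin n → ℂ) (f i) = 0 := by
    intro i
    rw [MvPolynomial.eval_zero]
    exact (hhom i).coeff_eq_zero
      (by simpa [map_zero] using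
        Ne.symm (deg_pos f d hhom hindep i))
  -- Step A: every invariant polynomial takes the same value at `u` and at `0`
  have stepA : ∀ p : MvPolynomial (Fin n) ℂ, p ∈ Algebra.adjoin ℂ (Set.range f) →
      MvPolynomial.eval u p = MvPolynomial.eval 0 p := by
    intro p hp
    have hle : Algebra.adjoin ℂ (Set.range f) ≤
        AlgHom.equalizer (MvPolynomial.aeval u) (MvPolynomial.aeval (0 : Fin n → ℂ)) := by
      rw [Algebra.adjoin_le_iff]
      rintro _ ⟨i, rfl⟩
      show MvPolynomial.aeval u (f i) = MvPolynomial.aeval (0 : Fin n → ℂ) (f i)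
      rw [aeval_eq_eval', aeval_eq_eval', hu i, hf0 i]
    have h := hle hp
    rw [AlgHom.mem_equalizer] at h
    rwa [aeval_eq_eval', aeval_eq_eval'] at h
  -- the linear forms
  set N := Fintype.card G with hN
  let L : G → MvPolynomial (Fin n) ℂ := fun g =>
    ∑ k, MvPolynomial.C (∑ j, (starRingEnd ℂ) (u j) * (g : UGrp n).1 j k) * MvPolynomial.X k
  have hLeval : ∀ (g : G) (v : Fin n → ℂ), MvPolynomial.eval v (L g) =
      ∑ j, (starRingEnd ℂ) (u j) * (Matrix.mulVec (g : UGrp n).1 v j) := by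
    intro g v
    simp only [L, map_sum, map_mul, MvPolynomial.eval_C, MvPolynomial.eval_X,
      Matrix.mulVec, dotProduct]
    simp_rw [Finset.sum_mul, Finset.mul_sum]
    rw [Finset.sum_comm]
    exact Finset.sum_congr rfl fun j _ => Finset.sum_congr rfl fun k _ => by ring
  -- the product over the group
  set Q : Polynomial (MvPolynomial (Fin n) ℂ) :=
    ∏ g : G, (Polynomial.X - Polynomial.C (L g)) with hQ
  have hQmap : ∀ v : Fin n → ℂ, Q.map (MvPolynomial.eval v) =
      ∏ g : G, (Polynomial.X - Polynomial.C (MvPolynomial.eval v (L g))) := by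
    intro v
    rw [hQ, Polynomial.map_prod]
    simp [Polynomial.map_sub]
  have hcoeffval : ∀ (v : Fin n → ℂ) (k : ℕ), MvPolynomial.eval v (Q.coeff k) =
      (∏ g : G, (Polynomial.X - Polynomial.C (MvPolynomial.eval v (L g)))).coeff k := by
    intro v k
    rw [← hQmap, Polynomial.coeff_map]
  -- invariance of the coefficients of Q
  have hcoeffinv : ∀ k : ℕ, ∀ g ∈ G, ∀ v : Fin n → ℂ,
      MvPolynomial.eval (Matrix.mulVec (g : UGrp n).1 v) (Q.coeff k) =
        MvPolynomial.eval v (Q.coeff k) := by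
    intro k g hg v
    rw [hcoeffval, hcoeffval]
    congr 1
    refine Fintype.prod_equiv (Equiv.mulRight (⟨g, hg⟩ : G)) _ _ fun g' => ?_
    refine congrArg (fun x => Polynomial.X - Polynomial.C x) ?_
    rw [hLeval, hLeval]
    refine Finset.sum_congr rfl fun j _ => ?_
    congr 1
    have : ((g' * (⟨g, hg⟩ : G) : G) : UGrp n).1 = (g' : UGrp n).1 * g := by rfl
    rw [Equiv.coe_mulRight, this, ← Matrix.mulVec_mulVec]
  -- the values c_g
  set cval : G → ℂ := fun g => MvPolynomial.eval u (L g) with hcval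
  have hL0 : ∀ g : G, MvPolynomial.eval (0 : Fin n → ℂ) (L g) = 0 := by
    intro g
    rw [hLeval]
    simp [Matrix.mulVec_zero]
  -- the evaluated product equals X^N
  have hPu : ∏ g : G, (Polynomial.X - Polynomial.C (cval g)) = Polynomial.X ^ N := by
    ext k
    have h1 := hcoeffval u k
    have h2 := hcoeffval 0 k
    have h3 : MvPolynomial.eval u (Q.coeff k) = MvPolynomial.eval 0 (Q.coeff k) :=
      stepA _ (hgenalg _ (fun g hg v => hcoeffinv k g hg v))
    have h4 : (∏ g : G, (Polynomial.X - Polynomial.C (cval g))).coeff k =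
        (∏ g : G, (Polynomial.X - Polynomial.C (MvPolynomial.eval (0 : Fin n → ℂ) (L g)))).coeff k := by
      rw [← h1, ← h2, h3]
    rw [h4]
    congr 1
    calc (∏ g : G, (Polynomial.X - Polynomial.C (MvPolynomial.eval (0 : Fin n → ℂ) (L g))))
        = ∏ _g : G, (Polynomial.X : Polynomial ℂ) := by
          refine Finset.prod_congr rfl fun g _ => ?_
          rw [hL0 g]; simp
      _ = Polynomial.X ^ N := by rw [Finset.prod_const, hN, Finset.card_univ]
  -- evaluate at cval 1
  have hzero : Polynomial.eval (cval 1) (∏ g : G, (Polynomial.X - Polynomial.C (cval g))) = 0 := by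
    rw [Polynomial.eval_prod]
    exact Finset.prod_eq_zero (Finset.mem_univ (1 : G)) (by simp)
  rw [hPu] at hzero
  simp only [Polynomial.eval_pow, Polynomial.eval_X] at hzero
  have hc1 : cval 1 = 0 := by
    have hNpos : N ≠ 0 := by
      rw [hN]
      exact Fintype.card_ne_zero
    exact pow_eq_zero_iff hNpos |>.mp hzero
  -- but cval 1 = ∑ |u j|² ≠ 0
  have hc1' : cval 1 = ((∑ j, Complex.normSq (u j) : ℝ) : ℂ) := by
    simp only [hcval]
    rw [hLeval]
    have h1 : ((1 : G) : UGrp n).1 = (1 : Matrix (Fin n) (Fin n) ℂ) := rfl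
    rw [h1, Matrix.one_mulVec]
    push_cast
    exact Finset.sum_congr rfl fun j _ => (Complex.normSq_eq_conj_mul_self).symm
  obtain ⟨j0, hj0⟩ : ∃ j, u j ≠ 0 := by
    by_contra h
    push_neg at h
    exact hne (funext h)
  have hpos : (0 : ℝ) < ∑ j, Complex.normSq (u j) :=
    Finset.sum_pos' (fun j _ => Complex.normSq_nonneg _)
      ⟨j0, Finset.mem_univ j0, Complex.normSq_pos.mpr hj0⟩
  rw [hc1'] at hc1
  exact hpos.ne' (by exact_mod_cast hc1)

/-- If `G ≤ U(n)` is a finite unitary reflection group and `f₁, …, f_n` are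
homogeneous, algebraically independent generators of the algebra of `G`-invariant
polynomials, then the map `v ↦ (f₁(v), …, f_n(v))` is proper (preimages of compact
sets are compact); in particular it is a closed map. -/
theorem stmt_9 (n : ℕ) (G : Subgroup (UGrp n)) [Finite G]
    (hgen : Subgroup.closure {g : UGrp n | g ∈ G ∧ IsUnitaryReflection g} = G)
    (f : Fin n → MvPolynomial (Fin n) ℂ) (d : Fin n → ℕ)
    (hhom : ∀ i, (f i).IsHomogeneous (d i))
    (hindep : AlgebraicIndependent ℂ f)
    (hinv : ∀ i, ∀ g ∈ G, ∀ v : Fin n → ℂ,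
      MvPolynomial.eval (Matrix.mulVec (g : UGrp n).1 v) (f i) = MvPolynomial.eval v (f i))
    (hgenalg : ∀ p : MvPolynomial (Fin n) ℂ,
      (∀ g ∈ G, ∀ v : Fin n → ℂ,
        MvPolynomial.eval (Matrix.mulVec (g : UGrp n).1 v) p = MvPolynomial.eval v p) →
      p ∈ Algebra.adjoin ℂ (Set.range f)) :
    (∀ K : Set (Fin n → ℂ), IsCompact K →
      IsCompact ((fun v : Fin n → ℂ => fun i => MvPolynomial.eval v (f i)) ⁻¹' K)) ∧
    IsClosedMap (fun v : Fin n → ℂ => fun i => MvPolynomial.eval v (f i)) := by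
  set F : (Fin n → ℂ) → (Fin n → ℂ) := fun v i => MvPolynomial.eval v (f i) with hF
  have hcont : Continuous F :=
    continuous_pi fun i => MvPolynomial.continuous_eval (f i)
  have hproper : ∀ K : Set (Fin n → ℂ), IsCompact K → IsCompact (F ⁻¹' K) := by
    intro K hK
    have hclosed : IsClosed (F ⁻¹' K) := hK.isClosed.preimage hcont
    rcases Nat.eq_zero_or_pos n with hn | hn
    · -- n = 0 : the domain is a singleton
      subst hn
      exact (Set.toFinite _).isCompact
    · -- n > 0
      haveI : Nonempty (Fin n) := ⟨⟨0, hn⟩⟩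
      -- minimum of ∑ ‖f i‖ on the unit sphere
      set φ : (Fin n → ℂ) → ℝ := fun v => ∑ i, ‖MvPolynomial.eval v (f i)‖ with hφ
      have hφcont : Continuous φ := by
        refine continuous_finset_sum _ fun i _ => ?_
        exact (MvPolynomial.continuous_eval (f i)).norm
      have hSc : IsCompact (Metric.sphere (0 : Fin n → ℂ) 1) := isCompact_sphere 0 1
      have hSne : (Metric.sphere (0 : Fin n → ℂ) 1).Nonempty :=
        NormedSpace.sphere_nonempty.mpr zero_le_one
      obtain ⟨w, hwS, hwmin⟩ := hSc.exists_isMinOn hSne hφcont.continuousOn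
      set ε : ℝ := φ w with hε
      have hεpos : 0 < ε := by
        rcases lt_or_eq_of_le (Finset.sum_nonneg fun i _ => norm_nonneg _ : 0 ≤ φ w) with h | h
        · exact h
        · exfalso
          have hall : ∀ i, MvPolynomial.eval w (f i) = 0 := by
            intro i
            have := Finset.sum_eq_zero_iff_of_nonneg
              (fun i _ => norm_nonneg (MvPolynomial.eval w (f i))) |>.mp h.symm i (Finset.mem_univ i)
            exact norm_eq_zero.mp this
          have hw0 : w = 0 := common_zero G f d hhom hindep hgenalg w hall
          rw [hw0] at hwS
          simp at hwS
      -- bound on K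
      obtain ⟨R, hR⟩ : ∃ R : ℝ, ∀ y ∈ K, ‖y‖ ≤ R := hK.isBounded.exists_norm_le
      set B : ℝ := max 1 (n * R / ε) with hB
      have hsubset : F ⁻¹' K ⊆ Metric.closedBall 0 B := by
        intro v hv
        rw [Metric.mem_closedBall, dist_zero_right]
        by_cases h1 : ‖v‖ ≤ 1
        · exact le_trans h1 (le_max_left _ _)
        · push_neg at h1
          have hvne : ‖v‖ ≠ 0 := by positivity
          set r : ℝ := ‖v‖ with hr
          set uu : Fin n → ℂ := ((r : ℂ))⁻¹ • v with huu
          have hrC : ((r : ℂ)) ≠ 0 := by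
            simp only [ne_eq, Complex.ofReal_eq_zero]
            exact hvne
          have hvu : v = (r : ℂ) • uu := by
            rw [huu, smul_inv_smul₀ hrC]
          have huunorm : ‖uu‖ = 1 := by
            rw [huu, norm_smul]
            rw [norm_inv, Complex.norm_real, Real.norm_eq_abs, abs_of_pos (by linarith)]
            field_simp
            exact hr.symm
          have huuS : uu ∈ Metric.sphere (0 : Fin n → ℂ) 1 := by
            simp [huunorm]
          have hφuu : ε ≤ φ uu := hwmin huuS
          -- φ v ≥ r * ε
          have hscale : ∀ i, ‖MvPolynomial.eval v (f i)‖ = r ^ d i * ‖MvPolynomial.eval uu (f i)‖ := by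
            intro i
            rw [hvu, homog_eval_smul (hhom i), norm_mul, norm_pow, Complex.norm_real,
              Real.norm_eq_abs, abs_of_pos (by linarith)]
          have hφv : r * ε ≤ φ v := by
            calc r * ε ≤ r * φ uu := by
                  exact mul_le_mul_of_nonneg_left hφuu (by linarith)
              _ = ∑ i, r * ‖MvPolynomial.eval uu (f i)‖ := by
                  rw [hφ, Finset.mul_sum]
              _ ≤ ∑ i, r ^ d i * ‖MvPolynomial.eval uu (f i)‖ := by
                  refine Finset.sum_le_sum fun i _ => ?_
                  refine mul_le_mul_of_nonneg_right ?_ (norm_nonneg _)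
                  calc r = r ^ 1 := (pow_one r).symm
                    _ ≤ r ^ d i := by
                        refine pow_le_pow_right₀ (by linarith) ?_
                        exact Nat.one_le_iff_ne_zero.mpr (deg_pos f d hhom hindep i)
              _ = φ v := by
                  rw [hφ]
                  exact (Finset.sum_congr rfl fun i _ => (hscale i).symm)
          -- φ v ≤ n * R
          have hFvK : F v ∈ K := hv
          have hφv2 : φ v ≤ n * R := by
            have hnormFv : ‖F v‖ ≤ R := hR _ hFvK
            calc φ v = ∑ i, ‖F v i‖ := rfl
              _ ≤ ∑ _i : Fin n, ‖F v‖ := Finset.sum_le_sum fun i _ => norm_le_pi_norm (F v) i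
              _ = n * ‖F v‖ := by rw [Finset.sum_const, Finset.card_univ, Fintype.card_fin,
                    nsmul_eq_mul]
              _ ≤ n * R := by
                  refine mul_le_mul_of_nonneg_left hnormFv (by positivity)
          have : r * ε ≤ n * R := le_trans hφv hφv2
          have hrb : r ≤ n * R / ε := (le_div_iff₀ hεpos).mpr this
          exact le_trans hrb (le_max_right _ _)
      exact (isCompact_closedBall 0 B).of_isClosed_subset hclosed hsubset
  have hpm : IsProperMap F :=
    isProperMap_iff_isCompact_preimage.mpr ⟨hcont, fun K hK => hproper K hK⟩
  exact ⟨hproper, hpm.isClosedMap⟩
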